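/- (Corollary 3.3, Fedorov–Jovanović, Euclidean case Q̄ = ℝ^n.) Let X be a smooth vector field on ℝ^n × ℝ^n, let f: ℝ^n → ℝ be smooth and nowhere-vanishing, and let X_C be the Chaplygin-rescaled vector field. If X_C is Hamiltonian, i.e. there exists a smooth function H_C: ℝ^n × ℝ^n → ℝ with Ω(X_C(z), v) = DH_C(z)[v] for all z and v, then div(f^{n−1}X) = 0 identically; that is, X preserves the measure f(q)^{n−1} dq dp. -/

import Mathlib

noncomputable section

open Matrix

/-- Configuration vectors: points of `ℝⁿ`. -/
abbrev Vec (n : ℕ) : Type := Fin n → ℝ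

/-- Phase space `ℝⁿ × ℝⁿ`, points `z = (q, p)`. -/
abbrev Phase (n : ℕ) : Type := Vec n × Vec n

/-- Canonical symplectic form `Ω(u,v) = ⟨u_q, v_p⟩ − ⟨u_p, v_q⟩`. -/
def Omega {n : ℕ} (u v : Phase n) : ℝ := u.1 ⬝ᵥ v.2 - u.2 ⬝ᵥ v.1

/-- Liouville one-form `Θ_z(v) = ⟨p, v_q⟩` at `z = (q,p)`. -/
def Theta {n : ℕ} (z v : Phase n) : ℝ := z.2 ⬝ᵥ v.1

/-- Fiber scaling `Ψ_f(q,p) = (q, f(q)·p)`. -/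
def Psi {n : ℕ} (f : Vec n → ℝ) (z : Phase n) : Phase n := (z.1, f z.1 • z.2)

/-- `Ψ_{1/f}`, the inverse of `Ψ_f`. -/
def PsiInv {n : ℕ} (f : Vec n → ℝ) : Phase n → Phase n := Psi fun q => (f q)⁻¹

/-- The Chaplygin-rescaled vector field
`X_C(z) := DΨ_f(Ψ_{1/f}(z))[(1/f(q))·X(Ψ_{1/f}(z))]`. -/
def ChapRescale {n : ℕ} (f : Vec n → ℝ) (X : Phase n → Phase n) (z : Phase n) : Phase n :=
  fderiv ℝ (Psi f) (PsiInv f z) ((f z.1)⁻¹ • X (PsiInv f z))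

/-- The two-form `df ∧ Θ`. -/
def dfTheta {n : ℕ} (f : Vec n → ℝ) (z u v : Phase n) : ℝ :=
  fderiv ℝ f z.1 u.1 * (z.2 ⬝ᵥ v.1) - fderiv ℝ f z.1 v.1 * (z.2 ⬝ᵥ u.1)

/-- Divergence of a vector field: `div Y (z) = trace DY(z)`. -/
def divergence {n : ℕ} (Y : Phase n → Phase n) (z : Phase n) : ℝ :=
  LinearMap.trace ℝ (Phase n) (fderiv ℝ Y z).toLinearMap


set_option maxHeartbeats 1000000

/-- `L ↦ (fun i => L (0, δᵢ))` as a continuous linear map. -/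
def ellp (n : ℕ) : (Phase n →L[ℝ] ℝ) →L[ℝ] Vec n :=
  ContinuousLinearMap.pi fun i => ContinuousLinearMap.apply ℝ ℝ (((0 : Vec n), Pi.single i 1) : Phase n)

/-- `L ↦ (fun i => L (δᵢ, 0))` as a continuous linear map. -/
def ellq (n : ℕ) : (Phase n →L[ℝ] ℝ) →L[ℝ] Vec n :=
  ContinuousLinearMap.pi fun i => ContinuousLinearMap.apply ℝ ℝ ((Pi.single i 1, (0 : Vec n)) : Phase n)

@[simp] lemma ellp_apply {n : ℕ} (L : Phase n →L[ℝ] ℝ) (i : Fin n) :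
    ellp n L i = L (0, Pi.single i 1) := rfl
@[simp] lemma ellq_apply {n : ℕ} (L : Phase n →L[ℝ] ℝ) (i : Fin n) :
    ellq n L i = L (Pi.single i 1, 0) := rfl

/-- The explicit Hamiltonian form of `f^{n-1}·X`. -/
def Yexp (n : ℕ) (f : Vec n → ℝ) (H : Phase n → ℝ) : Phase n → Phase n := fun w =>
  ((f w.1 ^ n) • ellp n (fderiv ℝ H (Psi f w)),
    -((f w.1 ^ (n - 1)) • ((fderiv ℝ f w.1 (ellp n (fderiv ℝ H (Psi f w)))) • w.2
        + ellq n (fderiv ℝ H (Psi f w)))))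

lemma divergence_eq_sum {n : ℕ} (Y : Phase n → Phase n) (z : Phase n) :
    divergence Y z = ∑ i, (fderiv ℝ Y z (Pi.single i 1, 0)).1 i
      + ∑ i, (fderiv ℝ Y z (0, Pi.single i 1)).2 i := by
  classical
  rw [divergence, LinearMap.trace_eq_matrix_trace ℝ
    ((Pi.basisFun ℝ (Fin n)).prod (Pi.basisFun ℝ (Fin n)))]
  rw [Matrix.trace, Fintype.sum_sum_type]
  simp [Matrix.diag, LinearMap.toMatrix_apply, Module.Basis.prod_repr_inl, Module.Basis.prod_repr_inr,
    Module.Basis.prod_apply, Pi.basisFun_repr, Pi.basisFun_apply]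

lemma hasFDerivAt_Psi {n : ℕ} {f : Vec n → ℝ} (hf : ContDiff ℝ (⊤ : ℕ∞) f) (w : Phase n) :
    HasFDerivAt (Psi f)
      ((ContinuousLinearMap.fst ℝ (Vec n) (Vec n)).prod
        (f w.1 • ContinuousLinearMap.snd ℝ (Vec n) (Vec n) +
          ((fderiv ℝ f w.1).comp (ContinuousLinearMap.fst ℝ (Vec n) (Vec n))).smulRight w.2)) w := by
  have hc : HasFDerivAt (fun z : Phase n => f z.1)
      ((fderiv ℝ f w.1).comp (ContinuousLinearMap.fst ℝ (Vec n) (Vec n))) w :=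
    ((hf.differentiable (by simp) w.1).hasFDerivAt).comp w (hasFDerivAt_fst)
  exact (hasFDerivAt_fst).prodMk (hc.smul (hasFDerivAt_snd))

lemma psiInv_psi {n : ℕ} {f : Vec n → ℝ} (hf0 : ∀ q, f q ≠ 0) (w : Phase n) :
    PsiInv f (Psi f w) = w := by
  simp [PsiInv, Psi, smul_smul, inv_mul_cancel₀ (hf0 w.1)]

lemma chap_formula {n : ℕ} {f : Vec n → ℝ} (hf : ContDiff ℝ (⊤ : ℕ∞) f)
    (hf0 : ∀ q, f q ≠ 0) (X : Phase n → Phase n) (w : Phase n) :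
    ChapRescale f X (Psi f w) =
      ((f w.1)⁻¹ • (X w).1,
        ((f w.1)⁻¹ * fderiv ℝ f w.1 ((X w).1)) • w.2 + (X w).2) := by
  rw [ChapRescale, psiInv_psi hf0 w, (hasFDerivAt_Psi hf w).fderiv]
  have h1 : (Psi f w).1 = w.1 := rfl
  rw [h1]
  ext i
  · simp
  · simp [smul_smul, mul_inv_cancel₀ (hf0 w.1), _root_.map_smul]
    rw [inv_mul_cancel₀ (hf0 w.1), one_mul, add_comm]

lemma hasFDerivAt_pow_comp {E : Type*} [NormedAddCommGroup E] [NormedSpace ℝ E]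
    {g : E → ℝ} {g' : E →L[ℝ] ℝ} {x : E} (hg : HasFDerivAt g g' x) (m : ℕ) :
    HasFDerivAt (fun y => g y ^ m) (((m : ℝ) * g x ^ (m - 1)) • g') x := by
  induction m with
  | zero => simpa using hasFDerivAt_const (1 : ℝ) x
  | succ k ih =>
    have h := ih.mul hg
    have hfun : (fun y => g y ^ k * g y) = fun y => g y ^ (k + 1) := by
      funext y; rw [← pow_succ]
    rw [show ((fun y => g y ^ k) * g) = fun y => g y ^ (k + 1) from hfun] at h
    refine h.congr_fderiv (Eq.symm ?_)
    cases k with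
    | zero => simp
    | succ m' =>
      simp only [Nat.add_sub_cancel]
      rw [smul_smul, ← add_smul]
      congr 1
      push_cast
      rw [pow_succ]
      ring

lemma clm_sum {n : ℕ} (L : Vec n →L[ℝ] ℝ) (v : Vec n) :
    L v = ∑ i, v i * L (Pi.single i 1) := by
  have hv : v = ∑ i, v i • (Pi.single i 1 : Vec n) := by
    funext j; simp [Pi.single_apply]
  conv_lhs => rw [hv]
  rw [map_sum]
  simp

lemma clm_snd_sum {n : ℕ} (M : Phase n →L[ℝ] (Phase n →L[ℝ] ℝ)) (v : Vec n) (w' : Phase n) :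
    M (0, v) w' = ∑ j, v j * M (0, Pi.single j 1) w' := by
  have hv : ((0 : Vec n), v) = ∑ j, (((0 : Vec n), (v j • (Pi.single j 1 : Vec n))) : Phase n) := by
    ext j
    · simp [Prod.fst_sum]
    · simp [Prod.snd_sum, Pi.single_apply]
  have hterm : ∀ j : Fin n, M ((0 : Vec n), (v j • (Pi.single j 1 : Vec n)))
      = v j • M ((0 : Vec n), Pi.single j 1) := by
    intro j
    rw [show (((0 : Vec n), (v j • (Pi.single j 1 : Vec n))) : Phase n)
        = v j • (((0 : Vec n), Pi.single j 1) : Phase n) by ext <;> simp, _root_.map_smul]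
  rw [hv, map_sum]
  simp [hterm]

lemma div_Yexp (n : ℕ) (hn : 1 ≤ n) (f : Vec n → ℝ) (H : Phase n → ℝ)
    (hf : ContDiff ℝ (⊤ : ℕ∞) f) (hH : ContDiff ℝ (⊤ : ℕ∞) H) (z : Phase n) :
    divergence (Yexp n f H) z = 0 := by
  classical
  have hfd := hf.differentiable (by simp)
  have hHd : ∀ y, HasFDerivAt H (fderiv ℝ H y) y :=
    fun y => ((hH.differentiable (by simp)) y).hasFDerivAt
  have hf1 : ContDiff ℝ (⊤ : ℕ∞) (fderiv ℝ f) := hf.fderiv_right (mod_cast le_top)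
  have hH1 : ContDiff ℝ (⊤ : ℕ∞) (fderiv ℝ H) := hH.fderiv_right (mod_cast le_top)
  have hΨ := hasFDerivAt_Psi hf z
  have hq1 : HasFDerivAt (fun w : Phase n => f w.1)
      ((fderiv ℝ f z.1).comp (ContinuousLinearMap.fst ℝ (Vec n) (Vec n))) z :=
    (hfd z.1).hasFDerivAt.comp z hasFDerivAt_fst
  have hT : HasFDerivAt (fderiv ℝ H) (fderiv ℝ (fderiv ℝ H) (Psi f z)) (Psi f z) :=
    ((hH1.differentiable (by simp)) (Psi f z)).hasFDerivAt
  have hG : HasFDerivAt (fun w => fderiv ℝ H (Psi f w)) _ z := hT.comp z hΨ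
  have hHp : HasFDerivAt (fun w => ellp n (fderiv ℝ H (Psi f w))) _ z :=
    ((ellp n).hasFDerivAt).comp z hG
  have hHq : HasFDerivAt (fun w => ellq n (fderiv ℝ H (Psi f w))) _ z :=
    ((ellq n).hasFDerivAt).comp z hG
  have ha : HasFDerivAt (fun w : Phase n => f w.1 ^ n) _ z := hasFDerivAt_pow_comp hq1 n
  have hc2 : HasFDerivAt (fun w : Phase n => f w.1 ^ (n - 1)) _ z := hasFDerivAt_pow_comp hq1 (n - 1)
  have hf'w : HasFDerivAt (fun w : Phase n => fderiv ℝ f w.1)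
      ((fderiv ℝ (fderiv ℝ f) z.1).comp (ContinuousLinearMap.fst ℝ (Vec n) (Vec n))) z :=
    ((hf1.differentiable (by simp)) z.1).hasFDerivAt.comp z hasFDerivAt_fst
  have hd : HasFDerivAt (fun w => fderiv ℝ f w.1 (ellp n (fderiv ℝ H (Psi f w)))) _ z :=
    hf'w.clm_apply hHp
  have hY1 : HasFDerivAt (fun w : Phase n => (f w.1 ^ n) • ellp n (fderiv ℝ H (Psi f w))) _ z :=
    ha.smul hHp
  have hY2 : HasFDerivAt (fun w : Phase n =>
      -((f w.1 ^ (n - 1)) • ((fderiv ℝ f w.1 (ellp n (fderiv ℝ H (Psi f w)))) • w.2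
        + ellq n (fderiv ℝ H (Psi f w))))) _ z :=
    (hc2.smul ((hd.smul hasFDerivAt_snd).add hHq)).neg
  have hY : HasFDerivAt (Yexp n f H) _ z := hY1.prodMk hY2
  rw [divergence_eq_sum, hY.fderiv]
  simp only [ContinuousLinearMap.prod_apply, ContinuousLinearMap.add_apply,
    ContinuousLinearMap.coe_smul', ContinuousLinearMap.smulRight_apply,
    ContinuousLinearMap.coe_comp', Function.comp_apply, ContinuousLinearMap.coe_fst',
    ContinuousLinearMap.coe_snd', ContinuousLinearMap.neg_apply, ContinuousLinearMap.flip_apply,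
    Pi.smul_apply, Pi.add_apply, Pi.neg_apply, smul_eq_mul, ellp_apply, ellq_apply,
    ContinuousLinearMap.smul_apply, map_zero, ContinuousLinearMap.zero_apply,
    ContinuousLinearMap.comp_apply, ContinuousLinearMap.apply_apply]
  simp only [smul_zero, zero_add, add_zero, zero_smul, mul_zero, zero_mul, Pi.single_eq_same]
  set F := f z.1 with hF
  set T := fderiv ℝ (fderiv ℝ H) (Psi f z) with hTd
  set G := fderiv ℝ H (Psi f z) with hGd
  set df := fderiv ℝ f z.1 with hdf
  have hsym : ∀ u v : Phase n, T u v = T v u := fun u v => second_derivative_symmetric hHd hT u v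
  have hpow : F ^ (n - 1) * F = F ^ n := by
    rw [← pow_succ]; congr 1; omega
  have hA : ∀ x : Fin n, T (Pi.single x 1, df (Pi.single x 1) • z.2) ((0 : Vec n), Pi.single x 1)
      = T (Pi.single x 1, (0 : Vec n)) (0, Pi.single x 1)
        + ∑ j, df (Pi.single x 1) * z.2 j * T (0, Pi.single j 1) (0, Pi.single x 1) := by
    intro x
    have hsplit : ((Pi.single x 1 : Vec n), df (Pi.single x 1) • z.2)
        = ((Pi.single x 1 : Vec n), (0 : Vec n)) + ((0 : Vec n), df (Pi.single x 1) • z.2) := by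
      ext <;> simp
    rw [hsplit, map_add, ContinuousLinearMap.add_apply, clm_snd_sum]
    simp [mul_assoc]
  have hB : ∀ x : Fin n, ((0 : Vec n), F • (Pi.single x 1 : Vec n))
      = F • (((0 : Vec n), Pi.single x 1) : Phase n) := by
    intro x; ext <;> simp
  have hC : ∀ x : Fin n, df (ellp n (T ((0 : Vec n), F • (Pi.single x 1 : Vec n))))
      = F * ∑ j, T (0, Pi.single x 1) (0, Pi.single j 1) * df (Pi.single j 1) := by
    intro x
    rw [hB x, _root_.map_smul, _root_.map_smul, _root_.map_smul, smul_eq_mul]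
    congr 1
    rw [clm_sum df (ellp n (T (0, Pi.single x 1)))]
    simp
  have hB' : ∀ x : Fin n, T ((0 : Vec n), F • (Pi.single x 1 : Vec n)) ((Pi.single x 1 : Vec n), (0 : Vec n))
      = F * T (Pi.single x 1, 0) (0, Pi.single x 1) := by
    intro x
    rw [hB x, _root_.map_smul, ContinuousLinearMap.smul_apply, smul_eq_mul,
      hsym ((0 : Vec n), Pi.single x 1) (Pi.single x 1, (0 : Vec n))]
  have hD : df (ellp n G) = ∑ j, G (0, Pi.single j 1) * df (Pi.single j 1) := by
    rw [clm_sum df (ellp n G)]; simp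
  simp only [hA, hC, hB', hD, mul_one]
  simp only [mul_add, Finset.mul_sum, Finset.sum_mul, neg_add, Finset.sum_add_distrib,
    Finset.sum_neg_distrib]
  have key1 : ∑ x : Fin n, ∑ i : Fin n,
        F ^ n * (df (Pi.single x 1) * z.2 i * (T (0, Pi.single i 1)) (0, Pi.single x 1))
      = ∑ x : Fin n, ∑ i : Fin n,
        F ^ (n - 1) * (F * ((T (0, Pi.single x 1)) (0, Pi.single i 1) * df (Pi.single i 1)) * z.2 x) := by
    rw [Finset.sum_comm]
    refine Finset.sum_congr rfl fun x _ => Finset.sum_congr rfl fun i _ => ?_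
    linear_combination
      (-(df (Pi.single i 1) * z.2 x * (T (0, Pi.single x 1)) (0, Pi.single i 1))) * hpow
  have key2 : ∑ x : Fin n, ↑n * F ^ (n - 1) * df (Pi.single x 1) * G (0, Pi.single x 1)
      = ∑ x : Fin n, ∑ i : Fin n, F ^ (n - 1) * (G (0, Pi.single i 1) * df (Pi.single i 1)) := by
    calc ∑ x : Fin n, ↑n * F ^ (n - 1) * df (Pi.single x 1) * G (0, Pi.single x 1)
        = (n : ℝ) * ∑ i : Fin n, F ^ (n - 1) * (G (0, Pi.single i 1) * df (Pi.single i 1)) := by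
          rw [Finset.mul_sum]
          exact Finset.sum_congr rfl fun x _ => by ring
      _ = ∑ x : Fin n, ∑ i : Fin n, F ^ (n - 1) * (G (0, Pi.single i 1) * df (Pi.single i 1)) := by
          rw [Finset.sum_const, Finset.card_univ, Fintype.card_fin, nsmul_eq_mul]
  have key3 : ∑ x : Fin n, F ^ n * (T (Pi.single x 1, 0)) (0, Pi.single x 1)
      = ∑ x : Fin n, F ^ (n - 1) * (F * (T (Pi.single x 1, 0)) (0, Pi.single x 1)) :=
    Finset.sum_congr rfl fun x _ => by
      linear_combination (-((T (Pi.single x 1, 0)) (0, Pi.single x 1))) * hpow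
  linear_combination key1 + key2 + key3

lemma X_eq_Yexp (n : ℕ) (hn : 1 ≤ n) (X : Phase n → Phase n) (f : Vec n → ℝ)
    (hf : ContDiff ℝ (⊤ : ℕ∞) f) (hf0 : ∀ q, f q ≠ 0)
    (H : Phase n → ℝ)
    (heq : ∀ (z v : Phase n), Omega (ChapRescale f X z) v = fderiv ℝ H z v) :
    (fun w => f w.1 ^ (n - 1) • X w) = Yexp n f H := by
  funext w
  have h1 : ∀ i, (X w).1 i = f w.1 * fderiv ℝ H (Psi f w) (0, Pi.single i 1) := by
    intro i
    have h := heq (Psi f w) (((0 : Vec n), Pi.single i 1) : Phase n)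
    rw [chap_formula hf hf0 X w] at h
    simp [Omega, dotProduct_single] at h
    rw [← h]
    rw [mul_comm ((f w.1)⁻¹), mul_comm (f w.1), mul_assoc, inv_mul_cancel₀ (hf0 w.1), mul_one]
  have h1v : (X w).1 = f w.1 • ellp n (fderiv ℝ H (Psi f w)) := by
    funext i
    rw [h1]
    simp
  have h2 : ∀ i, (X w).2 i =
      -(fderiv ℝ f w.1 (ellp n (fderiv ℝ H (Psi f w))) * w.2 i)
        - fderiv ℝ H (Psi f w) (Pi.single i 1, 0) := by
    intro i
    have h := heq (Psi f w) (((Pi.single i 1 : Vec n), (0 : Vec n)) : Phase n)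
    rw [chap_formula hf hf0 X w] at h
    simp [Omega, single_dotProduct, dotProduct_single] at h
    rw [h1v] at h
    rw [_root_.map_smul, smul_eq_mul, ← mul_assoc, inv_mul_cancel₀ (hf0 w.1), one_mul] at h
    linarith [h]
  have hpow : f w.1 ^ (n - 1) * f w.1 = f w.1 ^ n := by
    rw [← pow_succ]; congr 1; omega
  ext i
  · show f w.1 ^ (n - 1) * (X w).1 i = _
    rw [h1, Yexp]
    simp [← mul_assoc, hpow]
  · show f w.1 ^ (n - 1) * (X w).2 i = _
    rw [h2, Yexp]
    simp
    ring

theorem statement1 (n : ℕ) (hn : 1 ≤ n) (X : Phase n → Phase n) (f : Vec n → ℝ)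
    (hX : ContDiff ℝ (⊤ : ℕ∞) X) (hf : ContDiff ℝ (⊤ : ℕ∞) f) (hf0 : ∀ q, f q ≠ 0)
    (hHam : ∃ H_C : Phase n → ℝ, ContDiff ℝ (⊤ : ℕ∞) H_C ∧
      ∀ (z v : Phase n), Omega (ChapRescale f X z) v = fderiv ℝ H_C z v) :
    ∀ z : Phase n, divergence (fun w => f w.1 ^ (n - 1) • X w) z = 0 := by
  obtain ⟨H, hHC, heq⟩ := hHam
  intro z
  rw [X_eq_Yexp n hn X f hf hf0 H heq]
  exact div_Yexp n hn f H hf hHC z
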